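/- For every natural number n > 2, the topological complexity of the finite model 𝕊¹_n of the circle with 2n points satisfies TC(𝕊¹_n) ≤ 3. -/

import Mathlib

open Set

/-- `Q ⊆ X × X` admits a motion planner: a continuous map `s` from `Q` to the path
space `P(X) = C(I, X)` (with the compact-open topology) that is a section of the
endpoint map `π : C(I, X) → X × X`, `γ ↦ (γ 0, γ 1)`. -/
def AdmitsMotionPlanner {X : Type*} [TopologicalSpace X] (Q : Set (X × X)) : Prop :=
  ∃ s : C(Q, C(unitInterval, X)), ∀ q : Q, ((s q) 0, (s q) 1) = (q : X × X)

/-- `X × X` is covered by `k` open sets, each admitting a motion planner. -/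
def TCCover (X : Type*) [TopologicalSpace X] (k : ℕ) : Prop :=
  ∃ Q : Fin k → Set (X × X),
    (∀ i, IsOpen (Q i)) ∧ (⋃ i, Q i) = Set.univ ∧ ∀ i, AdmitsMotionPlanner (Q i)

/-- The (unreduced) topological complexity of `X`: the least `k` such that `X × X`
can be covered by `k` open sets, each admitting a motion planner. -/
noncomputable def topologicalComplexity (X : Type*) [TopologicalSpace X] : ℕ :=
  sInf {k | TCCover X k}
/-- The underlying set of the finite model `𝕊¹_n` of the circle (`2n` points):
`Sum.inl i` is `x_i` and `Sum.inr i` is `y_i`. -/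
def SCirc (n : ℕ) : Type := Fin n ⊕ Fin n

namespace SCirc

/-- The minimal point `x_i` of `𝕊¹_n`. -/
def x {n : ℕ} (i : Fin n) : SCirc n := Sum.inl i

/-- The maximal point `y_i` of `𝕊¹_n`. -/
def y {n : ℕ} (i : Fin n) : SCirc n := Sum.inr i

/-- The partial order on `𝕊¹_n` generated by `x_i < y_i` and `x_{(i-1) mod n} < y_i`. -/
def le {n : ℕ} : SCirc n → SCirc n → Prop
  | Sum.inl i, Sum.inl j => i = j
  | Sum.inr i, Sum.inr j => i = j
  | Sum.inl i, Sum.inr j => i = j ∨ (i : ℕ) = ((j : ℕ) + n - 1) % n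
  | Sum.inr _, Sum.inl _ => False

/-- The Alexandrov topology on `𝕊¹_n`: open sets are down-sets.  The minimal open
neighbourhoods are `x_i^↓ = {x_i}` and `y_i^↓ = {y_i, x_i, x_{(i-1) mod n}}`. -/
instance (n : ℕ) : TopologicalSpace (SCirc n) where
  IsOpen U := ∀ a ∈ U, ∀ b, SCirc.le b a → b ∈ U
  isOpen_univ := fun _ _ _ _ => trivial
  isOpen_inter := fun _ _ hU hV a ha b hba => ⟨hU a ha.1 b hba, hV a ha.2 b hba⟩
  isOpen_sUnion := fun S hS a ha b hba => by
    obtain ⟨U, hUS, haU⟩ := ha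
    exact ⟨U, hUS, hS U hUS a haU b hba⟩

end SCirc

namespace SCirc

variable {n : ℕ}

open Fin.NatCast

lemma le_refl_ (a : SCirc n) : le a a := by cases a <;> simp [le]

lemma le_trans_ {a b c : SCirc n} (hab : le a b) (hbc : le b c) : le a c := by
  cases a <;> cases b <;> cases c <;> simp_all [le]

lemma isOpen_iff' {U : Set (SCirc n)} :
    IsOpen U ↔ ∀ a ∈ U, ∀ b, le b a → b ∈ U := Iff.rfl

lemma mem_of_le {U : Set (SCirc n)} (hU : IsOpen U) {a b : SCirc n}
    (h : le b a) (ha : a ∈ U) : b ∈ U := (isOpen_iff'.mp hU) a ha b h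

lemma isOpen_below (p : SCirc n) : IsOpen {q : SCirc n | le q p} :=
  isOpen_iff'.mpr (fun _ ha b hba => le_trans_ hba ha)

lemma isOpen_compl_y (j : Fin n) : IsOpen ({y j}ᶜ : Set (SCirc n)) := by
  refine isOpen_iff'.mpr (fun a ha b hba => ?_)
  intro hb
  apply ha
  subst hb
  cases a with
  | inl i => exact absurd hba (by simp [le, y])
  | inr i =>
      simp only [le, y] at hba
      subst hba
      exact rfl

/-- Monotone maps out of a subset of `X × X` are continuous. -/
lemma continuous_of_mono {Q : Set (SCirc n × SCirc n)} (f : Q → SCirc n)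
    (hf : ∀ q q' : Q, le q'.val.1 q.val.1 → le q'.val.2 q.val.2 → le (f q') (f q)) :
    Continuous f := by
  rw [continuous_def]
  intro U hU
  have hpre : f ⁻¹' U = Subtype.val ⁻¹'
      (⋃ q : {q : Q // f q ∈ U},
        {r : SCirc n | le r q.val.val.1} ×ˢ {r : SCirc n | le r q.val.val.2}) := by
    ext q'
    simp only [Set.mem_preimage, Set.mem_iUnion, Set.mem_prod, Set.mem_setOf_eq]
    constructor
    · intro h
      exact ⟨⟨q', h⟩, le_refl_ _, le_refl_ _⟩
    · rintro ⟨⟨q, hq⟩, h1, h2⟩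
      exact mem_of_le hU (hf q q' h1 h2) hq
  rw [hpre]
  exact (isOpen_iUnion (fun q => (isOpen_below _).prod (isOpen_below _))).preimage
    continuous_subtype_val

/-- A one-jump homotopy between pointwise comparable continuous maps. -/
noncomputable def stepHomotopy {Y : Type*} [TopologicalSpace Y] (f g : C(Y, SCirc n))
    (h : ∀ yy, le (f yy) (g yy)) : f.Homotopy g where
  toFun := fun p => if p.1 = 1 then g p.2 else f p.2
  continuous_toFun := by
    rw [continuous_def]
    intro U hU
    have hpre : (fun p : unitInterval × Y => if p.1 = 1 then g p.2 else f p.2) ⁻¹' U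
        = ({t : unitInterval | t ≠ 1} ×ˢ (f ⁻¹' U)) ∪ (Set.univ ×ˢ (g ⁻¹' U)) := by
      ext ⟨t, yy⟩
      simp only [Set.mem_preimage, Set.mem_union, Set.mem_prod, Set.mem_setOf_eq,
        ne_eq, Set.mem_univ, true_and]
      by_cases ht : t = 1
      · rw [if_pos ht]
        simp [ht]
      · rw [if_neg ht]
        simp only [ht, not_false_eq_true, true_and]
        constructor
        · exact fun hf' => Or.inl hf'
        · rintro (hf' | hg')
          · exact hf'
          · exact mem_of_le hU (h yy) hg'
    rw [hpre]
    exact (isOpen_ne.prod (f.continuous.isOpen_preimage U hU)).union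
      (isOpen_univ.prod (g.continuous.isOpen_preimage U hU))
  map_zero_left := by
    intro yy
    have h01 : (0 : unitInterval) ≠ 1 := by
      intro hh
      have := congrArg Subtype.val hh
      norm_num at this
    simp [h01]
  map_one_left := by intro yy; simp

/-! ### Arc coordinates -/

def phi [NeZero n] (j : Fin n) (t : ℕ) : SCirc n :=
  if t % 2 = 0 then x (j + ((t / 2 : ℕ) : Fin n)) else y (j + (((t + 1) / 2 : ℕ) : Fin n))

def rel (j : Fin n) : SCirc n → ℕ
  | Sum.inl i => 2 * ((i.val + n - j.val) % n)
  | Sum.inr i => 2 * ((i.val + n - j.val) % n) - 1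

lemma mod_add_shift (B c : ℕ) : (B % n + c) % n = (B + c) % n := by
  conv_rhs => rw [Nat.add_mod]
  rw [Nat.add_mod (B % n) c, Nat.mod_mod_of_dvd B dvd_rfl]

lemma val_add_cast [NeZero n] (j : Fin n) (s : ℕ) :
    (j + (s : Fin n)).val = (j.val + s) % n := by
  rw [Fin.val_add, Fin.val_natCast]
  rw [Nat.add_comm j.val (s % n), mod_add_shift, Nat.add_comm]

lemma rel_le (j : Fin n) (a : SCirc n) (hn0 : 0 < n) : rel j a ≤ 2 * n - 2 := by
  cases a with
  | inl i =>
      have := Nat.mod_lt (i.val + n - j.val) hn0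
      simp only [rel]; omega
  | inr i =>
      have := Nat.mod_lt (i.val + n - j.val) hn0
      simp only [rel]; omega


lemma k_pos (hn0 : 0 < n) {i j : Fin n} (hij : i ≠ j) :
    1 ≤ (i.val + n - j.val) % n := by
  rcases Nat.eq_zero_or_pos ((i.val + n - j.val) % n) with h0 | h1
  · exfalso
    obtain ⟨c, hc⟩ := Nat.dvd_of_mod_eq_zero h0
    have hi := i.isLt
    have hj := j.isLt
    rcases c with _ | c
    · omega
    · rcases c with _ | c
      · exact hij (Fin.ext (by omega))
      · have h2n : n * 2 ≤ n * (c + 1 + 1) := Nat.mul_le_mul_left n (by omega)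
        omega
  · exact h1

lemma phi_rel [NeZero n] {j : Fin n} {a : SCirc n} (ha : a ≠ y j) :
    phi j (rel j a) = a := by
  have hn0 : 0 < n := Fin.pos j
  cases a with
  | inl i =>
      set k := (i.val + n - j.val) % n with hk
      have hkn : k < n := Nat.mod_lt _ hn0
      have h2 : (2 * k) % 2 = 0 := by omega
      have h3 : (2 * k) / 2 = k := by omega
      simp only [rel, phi, ← hk, h2, if_pos, h3]
      have hjk : j.val ≤ i.val + n := by omega
      congr 1
      apply Fin.ext
      rw [val_add_cast, hk, Nat.add_comm (j.val : ℕ) _, mod_add_shift]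
      have : i.val + n - j.val + j.val = i.val + n := by
        have := j.isLt; omega
      rw [this, Nat.add_mod_right, Nat.mod_eq_of_lt i.isLt]
  | inr i =>
      have hij : i ≠ j := fun hh => ha (congrArg Sum.inr hh)
      set k := (i.val + n - j.val) % n with hk
      have hkn : k < n := Nat.mod_lt _ hn0
      have hk1 : 1 ≤ k := hk ▸ k_pos hn0 hij
      have h2 : (2 * k - 1) % 2 = 1 := by omega
      have h3 : (2 * k - 1 + 1) / 2 = k := by omega
      have h2' : ¬((2 * k - 1) % 2 = 0) := by omega
      simp only [rel, phi, ← hk, h2', if_false, h3]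
      congr 1
      apply Fin.ext
      rw [val_add_cast, hk, Nat.add_comm (j.val : ℕ) _, mod_add_shift]
      have : i.val + n - j.val + j.val = i.val + n := by
        have := j.isLt; omega
      rw [this, Nat.add_mod_right, Nat.mod_eq_of_lt i.isLt]

/-- `φ(2s) = x (j+s) ≤ y (j+s+1) = φ(2s+1)`. -/
lemma le_step_even [NeZero n] (j : Fin n) (s : ℕ) (hn2 : 1 < n) :
    le (phi j (2 * s)) (phi j (2 * s + 1)) := by
  have h2 : (2 * s) % 2 = 0 := by omega
  have h3 : (2 * s) / 2 = s := by omega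
  have h4 : ¬((2 * s + 1) % 2 = 0) := by omega
  have h5 : (2 * s + 1 + 1) / 2 = s + 1 := by omega
  simp only [phi, h2, if_pos, h4, if_false, h3, h5]
  show le (x _) (y _)
  refine Or.inr ?_
  rw [val_add_cast, val_add_cast]
  have hjs : (j.val + (s + 1)) % n + n - 1 = (j.val + (s + 1)) % n + (n - 1) := by omega
  rw [hjs, mod_add_shift]
  have : j.val + (s + 1) + (n - 1) = j.val + s + n := by omega
  rw [this, Nat.add_mod_right]

/-- `φ(2s+2) = x (j+s+1) ≤ y (j+s+1) = φ(2s+1)`. -/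
lemma le_step_odd [NeZero n] (j : Fin n) (s : ℕ) :
    le (phi j (2 * s + 2)) (phi j (2 * s + 1)) := by
  have h2 : (2 * s + 2) % 2 = 0 := by omega
  have h3 : (2 * s + 2) / 2 = s + 1 := by omega
  have h4 : ¬((2 * s + 1) % 2 = 0) := by omega
  have h5 : (2 * s + 1 + 1) / 2 = s + 1 := by omega
  simp only [phi, h2, if_pos, h4, if_false, h3, h5]
  exact Or.inl rfl

/-- key monotonicity of the clamped contraction maps -/
lemma mono_min [NeZero n] (hn2 : 1 < n) {j : Fin n} {a a' : SCirc n}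
    (ha : a ≠ y j) (ha' : a' ≠ y j) (h : le a a') (t : ℕ) :
    le (phi j (min (rel j a) t)) (phi j (min (rel j a') t)) := by
  have hn0 : 0 < n := by omega
  cases a with
  | inl i =>
    cases a' with
    | inl i' =>
        have : i = i' := h
        subst this; exact le_refl_ _
    | inr i' =>
        have hij : i' ≠ j := fun hh => ha' (congrArg Sum.inr hh)
        set k := (i'.val + n - j.val) % n with hk
        have hkn : k < n := Nat.mod_lt _ hn0
        have hk1 : 1 ≤ k := hk ▸ k_pos hn0 hij
        have hrel' : rel j (Sum.inr i') = 2 * k - 1 := by simp [rel, ← hk]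
        rcases h with heq | hshift
        · -- a = x i', rel = 2k
          subst heq
          have hrel : rel j (Sum.inl i) = 2 * k := by simp [rel, ← hk]
          rw [hrel, hrel']
          rcases le_or_gt t (2 * k - 1) with htk | htk
          · have e1 : min (2 * k) t = t := by omega
            have e2 : min (2 * k - 1) t = t := by omega
            rw [e1, e2]; exact le_refl_ _
          · have e1 : min (2 * k) t = 2 * k := by omega
            have e2 : min (2 * k - 1) t = 2 * k - 1 := by omega
            rw [e1, e2]
            have := le_step_odd j (k - 1) (n := n)
            have ee : 2 * (k - 1) + 2 = 2 * k := by omega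
            have ee' : 2 * (k - 1) + 1 = 2 * k - 1 := by omega
            rwa [ee, ee'] at this
        · -- i.val = (i'.val + n - 1) % n, rel a = 2(k-1)
          have hrel : rel j (Sum.inl i) = 2 * (k - 1) := by
            simp only [rel]
            congr 1
            rw [hshift]
            have hj := j.isLt
            have e1 : (i'.val + n - 1) % n + n - j.val
                = (i'.val + n - 1) % n + (n - j.val) := by omega
            rw [e1, mod_add_shift]
            have e2 : i'.val + n - 1 + (n - j.val) = (i'.val + (n - j.val)) + (n - 1) := by
              have hi := i'.isLt; omega
            rw [e2, ← mod_add_shift]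
            have e3 : (i'.val + (n - j.val)) % n = k := by
              rw [hk]; congr 1; omega
            rw [e3]
            have e4 : k + (n - 1) = n + (k - 1) := by omega
            rw [e4, Nat.add_mod_left, Nat.mod_eq_of_lt (by omega)]
          rw [hrel, hrel']
          rcases le_or_gt t (2 * (k - 1)) with htk | htk
          · have e1 : min (2 * (k - 1)) t = t := by omega
            have e2 : min (2 * k - 1) t = t := by omega
            rw [e1, e2]; exact le_refl_ _
          · have e1 : min (2 * (k - 1)) t = 2 * (k - 1) := by omega
            have e2 : min (2 * k - 1) t = 2 * k - 1 := by omega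
            rw [e1, e2]
            have := le_step_even j (k - 1) hn2
            have ee : 2 * (k - 1) + 1 = 2 * k - 1 := by omega
            rwa [ee] at this
  | inr i =>
    cases a' with
    | inl i' => exact absurd h (by simp [le])
    | inr i' =>
        have : i = i' := h
        subst this; exact le_refl_ _

end SCirc

namespace SCirc

variable {n : ℕ}

open Fin.NatCast

/-- Any map into the punctured circle, monotone on `Q`, is homotopic to the constant `x j`. -/
lemma homotopic_const [NeZero n] (hn2 : 1 < n) (j : Fin n)
    (Q : Set (SCirc n × SCirc n)) (g : Q → SCirc n)
    (hav : ∀ q : Q, g q ≠ y j)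
    (hmono : ∀ q q' : Q, le q'.val.1 q.val.1 → le q'.val.2 q.val.2 → le (g q') (g q)) :
    Nonempty ((ContinuousMap.const Q (x j)).Homotopy
      (ContinuousMap.mk g (continuous_of_mono g hmono))) := by
  have hn0 : 0 < n := by omega
  let C : ℕ → C(Q, SCirc n) := fun t =>
    ⟨fun q => phi j (min (rel j (g q)) t),
     continuous_of_mono _ (fun q q' h1 h2 => mono_min hn2 (hav q') (hav q)
       (hmono q q' h1 h2) t)⟩
  have happ : ∀ t q, C t q = phi j (min (rel j (g q)) t) := fun _ _ => rfl
  have hstep : ∀ t, Nonempty ((C t).Homotopy (C (t + 1))) := by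
    intro t
    rcases Nat.even_or_odd t with ⟨s, hs⟩ | ⟨s, hs⟩
    · refine ⟨stepHomotopy _ _ (fun q => ?_)⟩
      rw [happ, happ]
      rcases le_or_gt (rel j (g q)) t with hr | hr
      · have e1 : min (rel j (g q)) t = rel j (g q) := by omega
        have e2 : min (rel j (g q)) (t + 1) = rel j (g q) := by omega
        rw [e1, e2]; exact le_refl_ _
      · have e1 : min (rel j (g q)) t = t := by omega
        have e2 : min (rel j (g q)) (t + 1) = t + 1 := by omega
        rw [e1, e2]
        have ht : t = 2 * s := by omega
        subst ht
        exact le_step_even j s hn2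
    · refine ⟨(stepHomotopy (C (t + 1)) (C t) (fun q => ?_)).symm⟩
      rw [happ, happ]
      rcases le_or_gt (rel j (g q)) t with hr | hr
      · have e1 : min (rel j (g q)) t = rel j (g q) := by omega
        have e2 : min (rel j (g q)) (t + 1) = rel j (g q) := by omega
        rw [e1, e2]; exact le_refl_ _
      · have e1 : min (rel j (g q)) t = t := by omega
        have e2 : min (rel j (g q)) (t + 1) = t + 1 := by omega
        rw [e1, e2]
        have ht : t + 1 = 2 * s + 2 := by omega
        have ht' : t = 2 * s + 1 := by omega
        rw [ht, ht']
        exact le_step_odd j s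
  have hchain : ∀ t, Nonempty ((C 0).Homotopy (C t)) := by
    intro t
    induction t with
    | zero => exact ⟨ContinuousMap.Homotopy.refl _⟩
    | succ t ih =>
        obtain ⟨H⟩ := ih
        obtain ⟨H'⟩ := hstep t
        exact ⟨H.trans H'⟩
  have h0 : C 0 = ContinuousMap.const Q (x j) := by
    ext q
    rw [happ]
    have : min (rel j (g q)) 0 = 0 := by omega
    rw [this]
    show phi j 0 = x j
    simp only [phi]
    norm_num
  have hend : C (2 * n - 2) = ContinuousMap.mk g (continuous_of_mono g hmono) := by
    ext q
    rw [happ]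
    have : min (rel j (g q)) (2 * n - 2) = rel j (g q) :=
      min_eq_left (rel_le j (g q) hn0)
    rw [this]
    exact phi_rel (hav q)
  obtain ⟨H⟩ := hchain (2 * n - 2)
  rw [h0, hend] at H
  exact ⟨H⟩

/-- Main planner lemma: any subset avoiding `y j` in both coordinates admits a planner. -/
lemma planner_of_avoid [NeZero n] (hn2 : 1 < n) (j : Fin n)
    (Q : Set (SCirc n × SCirc n)) (hQ : ∀ p ∈ Q, p.1 ≠ y j ∧ p.2 ≠ y j) :
    AdmitsMotionPlanner Q := by
  obtain ⟨H1⟩ := homotopic_const hn2 j Q (fun q => q.val.1)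
    (fun q => (hQ q.val q.prop).1)
    (fun q q' h1 _ => h1)
  obtain ⟨H2⟩ := homotopic_const hn2 j Q (fun q => q.val.2)
    (fun q => (hQ q.val q.prop).2)
    (fun q q' _ h2 => h2)
  let H := (H1.symm.trans H2)
  refine ⟨ContinuousMap.curry (H.toContinuousMap.comp
    ⟨Prod.swap, continuous_swap⟩), fun q => ?_⟩
  have h0 : (ContinuousMap.curry (H.toContinuousMap.comp
      ⟨Prod.swap, continuous_swap⟩)) q 0 = H (0, q) := rfl
  have h1 : (ContinuousMap.curry (H.toContinuousMap.comp
      ⟨Prod.swap, continuous_swap⟩)) q 1 = H (1, q) := rfl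
  rw [h0, h1, ContinuousMap.Homotopy.apply_zero, ContinuousMap.Homotopy.apply_one]
  rfl

lemma le_y_ne {j j' : Fin n} {q : SCirc n} (h : le q (y j)) (hjj : j ≠ j') :
    q ≠ y j' := by
  cases q with
  | inl i => exact Sum.inl_ne_inr
  | inr i =>
      have hji : i = j := h
      exact fun hh => hjj (hji ▸ Sum.inr.inj hh)

end SCirc

theorem tc_scirc_le_three' (n : ℕ) (hn : 2 < n) :
    topologicalComplexity (SCirc n) ≤ 3 := by
  haveI : NeZero n := ⟨by omega⟩
  have hn2 : 1 < n := by omega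
  set j0 : Fin n := ⟨0, by omega⟩ with hj0
  set j1 : Fin n := ⟨1, by omega⟩ with hj1
  set j2 : Fin n := ⟨2, by omega⟩ with hj2
  have h01 : j0 ≠ j1 := by simp [hj0, hj1]
  have h02 : j0 ≠ j2 := by simp [hj0, hj2]
  have h12 : j1 ≠ j2 := by simp [hj1, hj2]
  let U0 : Set (SCirc n) := {q | SCirc.le q (SCirc.y j0)}
  let U1 : Set (SCirc n) := {q | SCirc.le q (SCirc.y j1)}
  let Qs : Fin 3 → Set (SCirc n × SCirc n) :=
    ![({SCirc.y j0}ᶜ : Set (SCirc n)) ×ˢ ({SCirc.y j0}ᶜ : Set (SCirc n)),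
      ({SCirc.y j1}ᶜ : Set (SCirc n)) ×ˢ ({SCirc.y j1}ᶜ : Set (SCirc n)),
      (U0 ×ˢ U1) ∪ (U1 ×ˢ U0)]
  apply Nat.sInf_le
  refine ⟨Qs, ?_, ?_, ?_⟩
  · intro i
    fin_cases i
    · exact (SCirc.isOpen_compl_y j0).prod (SCirc.isOpen_compl_y j0)
    · exact (SCirc.isOpen_compl_y j1).prod (SCirc.isOpen_compl_y j1)
    · exact ((SCirc.isOpen_below _).prod (SCirc.isOpen_below _)).union
        ((SCirc.isOpen_below _).prod (SCirc.isOpen_below _))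
  · apply Set.eq_univ_iff_forall.mpr
    rintro ⟨a, b⟩
    rw [Set.mem_iUnion]
    by_cases h0 : a ≠ SCirc.y j0 ∧ b ≠ SCirc.y j0
    · exact ⟨0, h0.1, h0.2⟩
    by_cases h1 : a ≠ SCirc.y j1 ∧ b ≠ SCirc.y j1
    · exact ⟨1, h1.1, h1.2⟩
    refine ⟨2, ?_⟩
    push_neg at h0 h1
    have hyne : SCirc.y (n := n) j0 ≠ SCirc.y j1 := fun hh => h01 (Sum.inr.inj hh)
    show ((a, b) ∈ (U0 ×ˢ U1) ∪ (U1 ×ˢ U0))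
    rcases Classical.em (a = SCirc.y j0) with ha0 | ha0
    · have h1' := h1
      rcases Classical.em (a = SCirc.y j1) with ha1 | ha1
      · exact absurd (ha0 ▸ ha1 : SCirc.y j0 = SCirc.y j1).symm (Ne.symm hyne)
      · have hb1 : b = SCirc.y j1 := h1 ha1
        subst ha0; subst hb1
        exact Or.inl ⟨show SCirc.le (SCirc.y j0) (SCirc.y j0) from SCirc.le_refl_ _,
          show SCirc.le (SCirc.y j1) (SCirc.y j1) from SCirc.le_refl_ _⟩
    · have hb0 : b = SCirc.y j0 := h0 ha0
      rcases Classical.em (b = SCirc.y j1) with hb1 | hb1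
      · exact absurd (hb0 ▸ hb1 : SCirc.y j0 = SCirc.y j1).symm (Ne.symm hyne)
      · have ha1 : a = SCirc.y j1 := by
          rcases Classical.em (a = SCirc.y j1) with h | h
          · exact h
          · exact absurd (h1 h) hb1
        subst hb0; subst ha1
        exact Or.inr ⟨show SCirc.le (SCirc.y j1) (SCirc.y j1) from SCirc.le_refl_ _,
          show SCirc.le (SCirc.y j0) (SCirc.y j0) from SCirc.le_refl_ _⟩
  · intro i
    fin_cases i
    · exact SCirc.planner_of_avoid hn2 j0 _ (fun p hp => ⟨hp.1, hp.2⟩)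
    · exact SCirc.planner_of_avoid hn2 j1 _ (fun p hp => ⟨hp.1, hp.2⟩)
    · refine SCirc.planner_of_avoid hn2 j2 _ (fun p hp => ?_)
      rcases hp with ⟨h1', h2'⟩ | ⟨h1', h2'⟩
      · exact ⟨SCirc.le_y_ne h1' h02, SCirc.le_y_ne h2' h12⟩
      · exact ⟨SCirc.le_y_ne h1' h12, SCirc.le_y_ne h2' h02⟩

/-- For every natural number `n > 2`, the topological complexity of
the finite model `𝕊¹_n` of the circle with `2n` points satisfies `TC(𝕊¹_n) ≤ 3`. -/
theorem tc_scirc_le_three (n : ℕ) (hn : 2 < n) :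
    topologicalComplexity (SCirc n) ≤ 3 :=
  tc_scirc_le_three' n hn
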